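/- The function P(t) = 1 − ∑_{j=1}^∞ (−1)^{j−1}·2^j·exp(−(2^j − 1)t)·∏_{l=1}^j 1/(2^l − 1) satisfies the integral equation e^{−t}·P(t) = ∫_t^{2t} e^{−u}·P(u) du for all t ≥ 0. -/

import Mathlib

/-- The limiting distribution function
`P(t) = 1 - ∑_{j=1}^∞ (-1)^{j-1} 2^j e^{-(2^j-1)t} ∏_{l=1}^j (2^l-1)⁻¹`
(indices shifted by one here). -/
noncomputable def limP (t : ℝ) : ℝ :=
  1 - ∑' j : ℕ, (-1 : ℝ) ^ j * 2 ^ (j + 1) * Real.exp (-((2 : ℝ) ^ (j + 1) - 1) * t) *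
    ∏ l ∈ Finset.range (j + 1), ((2 : ℝ) ^ (l + 1) - 1)⁻¹

open MeasureTheory

noncomputable def cseq (j : ℕ) : ℝ := ∏ l ∈ Finset.range (j + 1), ((2 : ℝ) ^ (l + 1) - 1)⁻¹

lemma two_pow_sub_one_pos (n : ℕ) : (0 : ℝ) < 2 ^ (n + 1) - 1 := by
  have h : (2 : ℝ) ^ 1 ≤ 2 ^ (n + 1) := pow_le_pow_right₀ one_le_two (by omega)
  norm_num at h; linarith

lemma cseq_pos (j : ℕ) : 0 < cseq j := by
  apply Finset.prod_pos
  intro l _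
  exact inv_pos.mpr (two_pow_sub_one_pos l)

lemma cseq_zero : cseq 0 = 1 := by norm_num [cseq]

lemma cseq_succ (j : ℕ) : cseq (j + 1) = cseq j * ((2 : ℝ) ^ (j + 2) - 1)⁻¹ := by
  rw [cseq, cseq, Finset.prod_range_succ]

lemma cseq_mul (j : ℕ) : ((2 : ℝ) ^ (j + 2) - 1) * cseq (j + 1) = cseq j := by
  have h : ((2 : ℝ) ^ (j + 2) - 1) ≠ 0 := (two_pow_sub_one_pos (j + 1)).ne'
  rw [cseq_succ, mul_comm (cseq j), ← mul_assoc, mul_inv_cancel₀ h, one_mul]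

lemma cseq_le (j : ℕ) : cseq j ≤ (3 : ℝ)⁻¹ ^ j := by
  induction j with
  | zero => simp [cseq_zero]
  | succ n ih =>
    rw [cseq_succ, pow_succ]
    have h1 : ((2 : ℝ) ^ (n + 2) - 1)⁻¹ ≤ (3 : ℝ)⁻¹ := by
      apply inv_anti₀ (by norm_num)
      have : (2 : ℝ) ^ 2 ≤ 2 ^ (n + 2) := pow_le_pow_right₀ one_le_two (by omega)
      norm_num at this; linarith
    have := (cseq_pos n).le
    calc cseq n * ((2 : ℝ) ^ (n + 2) - 1)⁻¹ ≤ (3 : ℝ)⁻¹ ^ n * (3 : ℝ)⁻¹ := by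
          apply mul_le_mul ih h1 (inv_nonneg.mpr (two_pow_sub_one_pos (n+1)).le) (by positivity)
      _ = (3 : ℝ)⁻¹ ^ n * 3⁻¹ := rfl

lemma summable_bound : Summable (fun j : ℕ => (2 : ℝ) ^ (j + 1) * cseq j) := by
  apply Summable.of_nonneg_of_le (fun j => mul_nonneg (by positivity) (cseq_pos j).le)
    (fun j => ?_)
    ((summable_geometric_of_lt_one (by norm_num) (by norm_num : (2/3 : ℝ) < 1)).mul_left 2)
  calc (2 : ℝ) ^ (j + 1) * cseq j ≤ 2 ^ (j + 1) * (3 : ℝ)⁻¹ ^ j :=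
        mul_le_mul_of_nonneg_left (cseq_le j) (by positivity)
    _ = 2 * (2 / 3) ^ j := by rw [div_pow, pow_succ, inv_pow]; ring

lemma summable_cseq : Summable cseq := by
  apply Summable.of_nonneg_of_le (fun j => (cseq_pos j).le) cseq_le
    (summable_geometric_of_lt_one (by norm_num) (by norm_num))

lemma summable_of_bound {f : ℕ → ℝ} (h : ∀ j, ‖f j‖ ≤ (2 : ℝ) ^ (j + 1) * cseq j) :
    Summable f :=
  Summable.of_norm_bounded summable_bound h

lemma exp_le_one {x : ℝ} (hx : x ≤ 0) : Real.exp x ≤ 1 := by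
  rw [← Real.exp_zero]; exact Real.exp_le_exp.mpr hx

/-- the basic exponential integral -/
lemma integ (a t1 t2 : ℝ) :
    ∫ u in t1..t2, a * Real.exp (-(a * u)) = Real.exp (-(a * t1)) - Real.exp (-(a * t2)) := by
  have hd : ∀ x ∈ Set.uIcc t1 t2,
      HasDerivAt (fun u => -Real.exp (-(a * u))) (a * Real.exp (-(a * x))) x := by
    intro x _
    have h1 : HasDerivAt (fun u : ℝ => -(a * u)) (-a) x := by
      have h0 := ((hasDerivAt_id x).const_mul a).neg
      simp only [mul_one] at h0
      exact h0
    have h2 := (Real.hasDerivAt_exp (-(a * x))).comp x h1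
    have h3 := h2.neg
    exact h3.congr_deriv (by ring)
  rw [intervalIntegral.integral_eq_sub_of_hasDerivAt hd ?_]
  · show -Real.exp (-(a * t2)) - -Real.exp (-(a * t1)) = _
    ring
  · apply Continuous.intervalIntegrable
    continuity

/-- telescoping tsum -/
lemma tsum_telescope {d : ℕ → ℝ} (hd : Summable d) : ∑' j, (d j - d (j + 1)) = d 0 := by
  have hds : Summable (fun j => d (j + 1)) := (summable_nat_add_iff 1).mpr hd
  have hs : Summable (fun j => d j - d (j + 1)) := hd.sub hds
  have h1 := hs.hasSum.tendsto_sum_nat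
  have h2 : ∀ n, ∑ i ∈ Finset.range n, (d i - d (i + 1)) = d 0 - d n := fun n =>
    Finset.sum_range_sub' d n
  simp only [h2] at h1
  have h3 : Filter.Tendsto (fun n => d 0 - d n) Filter.atTop (nhds (d 0 - 0)) :=
    Filter.Tendsto.sub tendsto_const_nhds hd.tendsto_atTop_zero
  have := tendsto_nhds_unique h1 h3
  simpa using this

/-- `P` satisfies the integral equation `e^{-t} P(t) = ∫_t^{2t} e^{-u} P(u) du` for `t ≥ 0`. -/
theorem limP_integral_equation :
    ∀ t : ℝ, 0 ≤ t →
      Real.exp (-t) * limP t = ∫ u in t..(2 * t), Real.exp (-u) * limP u := by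
  intro t ht
  set f : ℕ → ℝ → ℝ := fun j u =>
    (-1 : ℝ) ^ j * cseq j * ((2 : ℝ) ^ (j + 1) * Real.exp (-((2 : ℝ) ^ (j + 1)) * u)) with hf
  -- pointwise reduction
  have hpoint : ∀ u : ℝ, Real.exp (-u) * limP u = Real.exp (-u) - ∑' j, f j u := by
    intro u
    have hlim : limP u = 1 - ∑' j : ℕ, (-1 : ℝ) ^ j * 2 ^ (j + 1) *
        Real.exp (-((2 : ℝ) ^ (j + 1) - 1) * u) * cseq j := rfl
    rw [hlim, mul_sub, mul_one, ← tsum_mul_left]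
    congr 1
    apply tsum_congr
    intro j
    simp only [hf]
    have hE : Real.exp (-u) * Real.exp (-((2 : ℝ) ^ (j + 1) - 1) * u) =
        Real.exp (-((2 : ℝ) ^ (j + 1)) * u) := by
      rw [← Real.exp_add]; congr 1; ring
    linear_combination ((-1 : ℝ) ^ j * 2 ^ (j + 1) * cseq j) * hE
  -- norms of f
  have hfnorm : ∀ j u, ‖f j u‖ = cseq j * ((2 : ℝ) ^ (j + 1) *
      Real.exp (-((2 : ℝ) ^ (j + 1)) * u)) := by
    intro j u
    rw [hf]
    simp only [Real.norm_eq_abs, abs_mul, abs_pow, abs_neg, abs_one, one_pow, one_mul,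
      abs_of_pos (cseq_pos j), abs_of_pos (pow_pos (by norm_num : (0:ℝ) < 2) (j+1)),
      abs_of_pos (Real.exp_pos _)]
  have hfbound : ∀ j u, 0 ≤ u → ‖f j u‖ ≤ (2 : ℝ) ^ (j + 1) * cseq j := by
    intro j u hu
    rw [hfnorm]
    have he : Real.exp (-((2 : ℝ) ^ (j + 1)) * u) ≤ 1 := by
      apply exp_le_one
      have : (0 : ℝ) < 2 ^ (j + 1) := by positivity
      nlinarith
    calc cseq j * ((2 : ℝ) ^ (j + 1) * Real.exp (-((2 : ℝ) ^ (j + 1)) * u))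
        ≤ cseq j * ((2 : ℝ) ^ (j + 1) * 1) := by
          apply mul_le_mul_of_nonneg_left _ (cseq_pos j).le
          apply mul_le_mul_of_nonneg_left he (by positivity)
      _ = (2 : ℝ) ^ (j + 1) * cseq j := by ring
  have ht2 : t ≤ 2 * t := by linarith
  -- each f j is continuous
  have hfc : ∀ j, Continuous (f j) := by
    intro j
    apply Continuous.mul continuous_const
    apply Continuous.mul continuous_const
    exact Real.continuous_exp.comp (by continuity)
  -- integral of f j
  have hfint : ∀ j, ∫ u in t..(2 * t), f j u =
      (-1 : ℝ) ^ j * cseq j *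
        (Real.exp (-((2 : ℝ) ^ (j + 1)) * t) - Real.exp (-((2 : ℝ) ^ (j + 1)) * (2 * t))) := by
    intro j
    have : ∀ u, f j u = ((-1 : ℝ) ^ j * cseq j) *
        ((2 : ℝ) ^ (j + 1) * Real.exp (-((2 : ℝ) ^ (j + 1) * u))) := by
      intro u; rw [hf]; ring_nf
    simp only [this]
    rw [intervalIntegral.integral_const_mul, integ]
    simp only [neg_mul]
  set b : ℕ → ℝ := fun j => (-1 : ℝ) ^ j * cseq j *
      (Real.exp (-((2 : ℝ) ^ (j + 1)) * t) - Real.exp (-((2 : ℝ) ^ (j + 1)) * (2 * t))) with hb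
  -- interchange sum and integral
  have hinterchange : ∫ u in t..(2 * t), (∑' j, f j u) = ∑' j, b j := by
    rw [intervalIntegral.integral_of_le ht2]
    rw [← integral_tsum_of_summable_integral_norm]
    · apply tsum_congr
      intro j
      rw [← intervalIntegral.integral_of_le ht2, hfint]
    · intro j
      have : IntegrableOn (f j) (Set.Ioc t (2 * t)) volume :=
        Continuous.integrableOn_Ioc (μ := volume) (hfc j)
      exact this
    · -- summable of integrals of norms
      apply Summable.of_nonneg_of_le
        (fun j => integral_nonneg (fun u => norm_nonneg _)) (fun j => ?_) summable_cseq
      have : ∫ u in Set.Ioc t (2 * t), ‖f j u‖ =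
          cseq j * (Real.exp (-((2 : ℝ) ^ (j + 1) * t)) -
            Real.exp (-((2 : ℝ) ^ (j + 1) * (2 * t)))) := by
        rw [← intervalIntegral.integral_of_le ht2]
        have heq : ∀ u, ‖f j u‖ = cseq j * ((2 : ℝ) ^ (j + 1) *
            Real.exp (-((2 : ℝ) ^ (j + 1) * u))) := by
          intro u; rw [hfnorm]; ring_nf
        simp only [heq]
        rw [intervalIntegral.integral_const_mul, integ]
      rw [this]
      have h1 : Real.exp (-((2 : ℝ) ^ (j + 1) * t)) ≤ 1 := by
        apply exp_le_one
        have : (0 : ℝ) < 2 ^ (j + 1) := by positivity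
        nlinarith
      have h2 : (0:ℝ) < Real.exp (-((2 : ℝ) ^ (j + 1) * (2 * t))) := Real.exp_pos _
      nlinarith [cseq_pos j]
  -- integrability for the splitting
  have hcont_sum : IntegrableOn (fun u => ∑' j, f j u) (Set.Ioc t (2 * t)) := by
    have hco : ContinuousOn (fun u => ∑' j, f j u) (Set.Ici (0 : ℝ)) := by
      apply continuousOn_tsum (fun j => (hfc j).continuousOn) summable_bound
      intro j u hu
      exact hfbound j u hu
    have hsub : Set.Icc t (2 * t) ⊆ Set.Ici (0 : ℝ) := fun x hx => le_trans ht hx.1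
    have h2 : IntegrableOn (fun u => ∑' j, f j u) (Set.Icc t (2 * t)) volume :=
      (hco.mono hsub).integrableOn_Icc
    exact h2.mono_set Set.Ioc_subset_Icc_self
  -- split the integral
  have hsplit : ∫ u in t..(2 * t), Real.exp (-u) * limP u =
      (∫ u in t..(2 * t), Real.exp (-u)) - ∫ u in t..(2 * t), (∑' j, f j u) := by
    rw [← intervalIntegral.integral_sub]
    · apply intervalIntegral.integral_congr
      intro u _
      exact hpoint u
    · apply Continuous.intervalIntegrable
      exact Real.continuous_exp.comp continuous_neg
    · rw [intervalIntegrable_iff_integrableOn_Ioc_of_le ht2]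
      exact hcont_sum
  have hexpint : ∫ u in t..(2 * t), Real.exp (-u) = Real.exp (-t) - Real.exp (-(2 * t)) := by
    have := integ 1 t (2 * t)
    simpa using this
  rw [hpoint t, hsplit, hexpint, hinterchange]
  -- now the series identity
  set d : ℕ → ℝ := fun j => (-1 : ℝ) ^ j * ((2 : ℝ) ^ (j + 1) - 1) * cseq j *
      Real.exp (-((2 : ℝ) ^ (j + 1)) * t) with hd
  have hsum_f : Summable (fun j => f j t) :=
    summable_of_bound (fun j => hfbound j t ht)
  have hsum_b : Summable b := by
    apply summable_of_bound
    intro j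
    rw [hb]
    simp only [Real.norm_eq_abs, abs_mul, abs_pow, abs_neg, abs_one, one_pow, one_mul,
      abs_of_pos (cseq_pos j)]
    have h1 : Real.exp (-((2 : ℝ) ^ (j + 1)) * t) ≤ 1 := by
      apply exp_le_one
      have : (0 : ℝ) < 2 ^ (j + 1) := by positivity
      nlinarith
    have h2 : (0:ℝ) < Real.exp (-((2 : ℝ) ^ (j + 1)) * t) := Real.exp_pos _
    have h3 : (0:ℝ) < Real.exp (-((2 : ℝ) ^ (j + 1)) * (2 * t)) := Real.exp_pos _
    have h4 : Real.exp (-((2 : ℝ) ^ (j + 1)) * (2 * t)) ≤ 1 := by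
      apply exp_le_one
      have : (0 : ℝ) < 2 ^ (j + 1) := by positivity
      nlinarith
    have habs : |Real.exp (-((2 : ℝ) ^ (j + 1)) * t) -
        Real.exp (-((2 : ℝ) ^ (j + 1)) * (2 * t))| ≤ 1 := by
      rw [abs_le]; constructor <;> nlinarith
    have h5 : (1:ℝ) ≤ 2 ^ (j + 1) := one_le_pow₀ one_le_two
    nlinarith [cseq_pos j, abs_nonneg (Real.exp (-((2 : ℝ) ^ (j + 1)) * t) -
        Real.exp (-((2 : ℝ) ^ (j + 1)) * (2 * t))), mul_le_mul_of_nonneg_left habs (cseq_pos j).le]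
  have hsum_d : Summable d := by
    apply summable_of_bound
    intro j
    rw [hd]
    simp only [Real.norm_eq_abs, abs_mul, abs_pow, abs_neg, abs_one, one_pow, one_mul,
      abs_of_pos (cseq_pos j), abs_of_pos (Real.exp_pos _),
      abs_of_pos (two_pow_sub_one_pos j)]
    have h1 : Real.exp (-((2 : ℝ) ^ (j + 1)) * t) ≤ 1 := by
      apply exp_le_one
      have : (0 : ℝ) < 2 ^ (j + 1) := by positivity
      nlinarith
    have h2 : (0:ℝ) < Real.exp (-((2 : ℝ) ^ (j + 1)) * t) := Real.exp_pos _
    nlinarith [cseq_pos j, pow_pos (by norm_num : (0:ℝ) < 2) (j + 1),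
      mul_pos (cseq_pos j) h2, mul_le_mul_of_nonneg_left h1 (cseq_pos j).le]
  -- termwise telescoping identity
  have hdiff : ∀ j, f j t - b j = d j - d (j + 1) := by
    intro j
    have hE : Real.exp (-((2 : ℝ) ^ (j + 1)) * (2 * t)) =
        Real.exp (-((2 : ℝ) ^ (j + 2)) * t) := by
      congr 1; ring
    have hC := cseq_mul j
    rw [hf, hb, hd]
    simp only [hE]
    have hexp1 : ((-1 : ℝ) ^ (j + 1)) = -(-1 : ℝ) ^ j := by ring
    linear_combination (-(-1 : ℝ) ^ j * Real.exp (-((2 : ℝ) ^ (j + 2)) * t)) * hC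
  have htel : (∑' j, f j t) - (∑' j, b j) = d 0 := by
    rw [← Summable.tsum_sub hsum_f hsum_b]
    rw [show (fun j => f j t - b j) = fun j => d j - d (j + 1) from funext hdiff]
    exact tsum_telescope hsum_d
  have hd0 : d 0 = Real.exp (-(2 * t)) := by
    simp only [hd, pow_zero, one_mul, cseq_zero, mul_one, neg_mul]
    norm_num
  linarith [htel, hd0]
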